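/- arXiv:1504.04079 — 2 statements merged into one kernel-verified Lean document; each statement's English description precedes it below -/
import Mathlib

section
/- For every real number M > 0, the quotient r(τ,x)² / (16M²·(τ + x²/2)) tends to 1 as (τ,x) → (0,0) along points with τ ≥ 0 and (τ,x) ≠ (0,0); that is, near the singular sphere the Schwarzschild radius satisfies the leading asymptotics r² ∼ 16M²(τ + x²/2). -/
open Filter Topology

/-- The Kruskal relation function `f_M(ρ) = (1 - ρ/(2M))·exp(ρ/(2M))`. -/
noncomputable def fM (M ρ : ℝ) : ℝ := (1 - ρ / (2 * M)) * Real.exp (ρ / (2 * M))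

lemma fM_hasDerivAt (M : ℝ) (hM : 0 < M) (x : ℝ) :
    HasDerivAt (fM M) (-(x / (2 * M)) * Real.exp (x / (2 * M)) / (2 * M)) x := by
  have h2M : (2 : ℝ) * M ≠ 0 := by positivity
  have hd : HasDerivAt (fun ρ : ℝ => ρ / (2 * M)) (1 / (2 * M)) x := by
    simpa using (hasDerivAt_id x).div_const (2 * M)
  have h1 : HasDerivAt (fun ρ : ℝ => 1 - ρ / (2 * M)) (-(1 / (2 * M))) x := by
    simpa using (hd.const_sub 1)
  have h2 : HasDerivAt (fun ρ : ℝ => Real.exp (ρ / (2 * M)))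
      (Real.exp (x / (2 * M)) * (1 / (2 * M))) x := (Real.hasDerivAt_exp _).comp x hd
  have := h1.mul h2
  refine this.congr_deriv ?_
  ring

lemma fM_strictAntiOn (M : ℝ) (hM : 0 < M) : StrictAntiOn (fM M) (Set.Ici 0) := by
  apply strictAntiOn_of_deriv_neg (convex_Ici 0)
  · exact fun x _ => ((fM_hasDerivAt M hM x).continuousAt).continuousWithinAt
  · intro x hx
    rw [interior_Ici] at hx
    rw [(fM_hasDerivAt M hM x).deriv]
    have hx0 : (0:ℝ) < x := hx
    have : (0:ℝ) < Real.exp (x / (2 * M)) := Real.exp_pos _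
    have : (0:ℝ) < x / (2 * M) := by positivity
    have h2M : (0:ℝ) < 2 * M := by positivity
    apply div_neg_of_neg_of_pos _ h2M
    exact mul_neg_of_neg_of_pos (by linarith) (Real.exp_pos _)

lemma fM_zero (M : ℝ) : fM M 0 = 1 := by simp [fM]

/-- Key one-variable limit: `(1 - (1-u)eᵘ)/u² → 1/2` as `u → 0⁺`. -/
lemma aux_lhopital :
    Tendsto (fun u : ℝ => (1 - (1 - u) * Real.exp u) / u ^ 2) (𝓝[>] (0:ℝ))
      (𝓝 (1/2)) := by
  have hf : ∀ x : ℝ, HasDerivAt (fun u : ℝ => 1 - (1 - u) * Real.exp u)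
      (x * Real.exp x) x := by
    intro x
    have h1 : HasDerivAt (fun u : ℝ => (1 - u) * Real.exp u)
        ((-1) * Real.exp x + (1 - x) * Real.exp x) x :=
      (((hasDerivAt_id x).const_sub 1).mul (Real.hasDerivAt_exp x))
    have := h1.const_sub 1
    refine this.congr_deriv ?_
    ring
  have hg : ∀ x : ℝ, HasDerivAt (fun u : ℝ => u ^ 2) (2 * x) x := by
    intro x
    simpa using hasDerivAt_pow 2 x
  apply HasDerivAt.lhopital_zero_nhdsGT
    (f' := fun x => x * Real.exp x) (g' := fun x => 2 * x)
  · exact Eventually.of_forall fun x => hf x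
  · exact Eventually.of_forall fun x => hg x
  · filter_upwards [self_mem_nhdsWithin] with x hx
    have : (0:ℝ) < x := hx
    positivity
  · have : ContinuousAt (fun u : ℝ => 1 - (1 - u) * Real.exp u) 0 := by fun_prop
    simpa using this.tendsto.mono_left nhdsWithin_le_nhds
  · have : ContinuousAt (fun u : ℝ => u ^ 2) 0 := by fun_prop
    simpa using this.tendsto.mono_left nhdsWithin_le_nhds
  · have h : Tendsto (fun x : ℝ => Real.exp x / 2) (𝓝[>] (0:ℝ)) (𝓝 (1/2)) := by
      have : ContinuousAt (fun x : ℝ => Real.exp x / 2) 0 := by fun_prop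
      simpa using this.tendsto.mono_left nhdsWithin_le_nhds
    apply h.congr'
    filter_upwards [self_mem_nhdsWithin] with x hx
    have hx0 : (0:ℝ) < x := hx
    field_simp

/-- `ρ²/(8M²(1 - fM M ρ)) → 1` as `ρ → 0⁺`. -/
lemma aux_h_limit (M : ℝ) (hM : 0 < M) :
    Tendsto (fun ρ : ℝ => ρ ^ 2 / (8 * M ^ 2 * (1 - fM M ρ))) (𝓝[>] (0:ℝ)) (𝓝 1) := by
  have hsub : Tendsto (fun ρ : ℝ => ρ / (2 * M)) (𝓝[>] (0:ℝ)) (𝓝[>] (0:ℝ)) := by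
    rw [tendsto_nhdsWithin_iff]
    constructor
    · have : ContinuousAt (fun ρ : ℝ => ρ / (2 * M)) 0 := by fun_prop
      simpa using this.tendsto.mono_left nhdsWithin_le_nhds
    · filter_upwards [self_mem_nhdsWithin] with x hx
      have : (0:ℝ) < x := hx
      have : (0:ℝ) < x / (2 * M) := by positivity
      exact this
  have hinv : Tendsto (fun u : ℝ => u ^ 2 / (1 - (1 - u) * Real.exp u)) (𝓝[>] (0:ℝ))
      (𝓝 2) := by
    have := (aux_lhopital).inv₀ (by norm_num)
    have h2 : ((1:ℝ)/2)⁻¹ = 2 := by norm_num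
    rw [h2] at this
    apply this.congr'
    filter_upwards [] with x
    simp [inv_div]
  have hcomp := hinv.comp hsub
  have : Tendsto (fun ρ : ℝ =>
      ((ρ / (2*M)) ^ 2 / (1 - (1 - ρ/(2*M)) * Real.exp (ρ/(2*M)))) / 2) (𝓝[>] (0:ℝ))
      (𝓝 (2/2)) := hcomp.div_const 2
  norm_num at this
  apply this.congr'
  filter_upwards [] with ρ
  unfold fM
  rw [div_pow, div_div, div_div]
  congr 1
  ring

/-- For every `M > 0`, the quotient `r(τ,x)² / (16M²·(τ + x²/2))` tends to `1` as
`(τ,x) → (0,0)` along points with `τ ≥ 0` and `(τ,x) ≠ (0,0)`, where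
`r(τ,x) = r_M((1-τ)² - x²)` and `r_M` is the Schwarzschild radius function
(characterized by `r_M(s) > 0` and `f_M(r_M(s)) = s` for all `s < 1`);
that is, near the singular sphere `r² ∼ 16M²(τ + x²/2)`. -/
theorem radius_leading_asymptotics (M : ℝ) (hM : 0 < M) (rM : ℝ → ℝ)
    (hrM : ∀ s : ℝ, s < 1 → 0 < rM s ∧ fM M (rM s) = s) :
    Tendsto
      (fun p : ℝ × ℝ =>
        (rM ((1 - p.1) ^ 2 - p.2 ^ 2)) ^ 2 / (16 * M ^ 2 * (p.1 + p.2 ^ 2 / 2)))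
      (𝓝[{p : ℝ × ℝ | 0 ≤ p.1 ∧ p ≠ (0, 0)}] (0, 0)) (𝓝 1) := by
  set S : Set (ℝ × ℝ) := {p : ℝ × ℝ | 0 ≤ p.1 ∧ p ≠ (0, 0)} with hS
  set F := 𝓝[S] ((0:ℝ), (0:ℝ)) with hF
  -- τ → 0 along F
  have htau : Tendsto (fun p : ℝ × ℝ => p.1) F (𝓝 0) := by
    have := (continuous_fst.tendsto ((0:ℝ), (0:ℝ))).mono_left
      (nhdsWithin_le_nhds (s := S))
    simpa using this
  -- basic eventual facts on F
  have hbasic : ∀ᶠ p : ℝ × ℝ in F, 0 ≤ p.1 ∧ p ≠ (0, 0) ∧ p.1 < 1 ∧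
      0 < 2 * p.1 + p.2 ^ 2 ∧ (1 - p.1) ^ 2 - p.2 ^ 2 < 1 := by
    filter_upwards [self_mem_nhdsWithin, htau.eventually (gt_mem_nhds one_pos)]
      with p hp hp1
    obtain ⟨hp0, hpne⟩ := hp
    have hd : 0 < 2 * p.1 + p.2 ^ 2 := by
      rcases lt_or_eq_of_le hp0 with h | h
      · nlinarith [sq_nonneg p.2]
      · have hx : p.2 ≠ 0 := by
          intro hx0
          exact hpne (Prod.ext h.symm hx0)
        have h2 : 0 < p.2 ^ 2 := by
          rcases hx.lt_or_gt with h' | h' <;> nlinarith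
        nlinarith
    refine ⟨hp0, hpne, hp1, hd, ?_⟩
    nlinarith [sq_nonneg p.2, mul_nonneg hp0 (le_of_lt (sub_pos.2 hp1))]
  -- s p → 1 from the left
  have hs : Tendsto (fun p : ℝ × ℝ => (1 - p.1) ^ 2 - p.2 ^ 2) F (𝓝[<] (1:ℝ)) := by
    rw [tendsto_nhdsWithin_iff]
    constructor
    · have hc : Continuous (fun p : ℝ × ℝ => (1 - p.1) ^ 2 - p.2 ^ 2) := by fun_prop
      have := (hc.tendsto ((0:ℝ), (0:ℝ))).mono_left (nhdsWithin_le_nhds (s := S))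
      simpa using this
    · filter_upwards [hbasic] with p hp
      exact hp.2.2.2.2
  -- rM tends to 0⁺ at 1⁻
  have hrmlim : Tendsto rM (𝓝[<] (1:ℝ)) (𝓝[>] (0:ℝ)) := by
    rw [tendsto_nhdsWithin_iff]
    constructor
    · rw [tendsto_order]
      constructor
      · intro a ha
        filter_upwards [self_mem_nhdsWithin] with t ht
        have := (hrM t ht).1
        linarith
      · intro a ha
        have hlt : fM M a < 1 := by
          have := (fM_strictAntiOn M hM) (Set.self_mem_Ici) (le_of_lt ha) ha
          simpa [fM_zero] using this
        have hmem : Set.Ioo (fM M a) 1 ∈ 𝓝[<] (1:ℝ) :=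
          Ioo_mem_nhdsLT_of_mem ⟨hlt, le_refl 1⟩
        filter_upwards [hmem] with t ht
        by_contra hcon
        push_neg at hcon
        have h1 := (hrM t ht.2).1
        have h2 := (hrM t ht.2).2
        have hle : fM M (rM t) ≤ fM M a :=
          ((fM_strictAntiOn M hM).le_iff_ge h1.le ha.le).2 hcon
        rw [h2] at hle
        linarith [ht.1]
    · filter_upwards [self_mem_nhdsWithin] with t ht
      exact (hrM t ht).1
  -- composition: rM(s p) → 0⁺
  have hr : Tendsto (fun p : ℝ × ℝ => rM ((1 - p.1) ^ 2 - p.2 ^ 2)) F (𝓝[>] (0:ℝ)) :=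
    hrmlim.comp hs
  -- main factor
  have hA : Tendsto (fun p : ℝ × ℝ =>
      (rM ((1 - p.1) ^ 2 - p.2 ^ 2)) ^ 2 /
        (8 * M ^ 2 * (1 - fM M (rM ((1 - p.1) ^ 2 - p.2 ^ 2))))) F (𝓝 1) :=
    (aux_h_limit M hM).comp hr
  -- correction factor
  have hC : Tendsto (fun p : ℝ × ℝ =>
      (1 - ((1 - p.1) ^ 2 - p.2 ^ 2)) / (2 * p.1 + p.2 ^ 2)) F (𝓝 1) := by
    have hlow : Tendsto (fun p : ℝ × ℝ => 1 - p.1 / 2) F (𝓝 1) := by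
      have := ((htau.div_const 2).const_sub 1)
      simpa using this
    have hup : Tendsto (fun _ : ℝ × ℝ => (1:ℝ)) F (𝓝 1) := tendsto_const_nhds
    refine tendsto_of_tendsto_of_tendsto_of_le_of_le' hlow hup ?_ ?_
    · filter_upwards [hbasic] with p hp
      obtain ⟨hp0, _, hp1, hd, _⟩ := hp
      rw [le_div_iff₀ hd]
      nlinarith [sq_nonneg p.2, mul_nonneg hp0 hp0]
    · filter_upwards [hbasic] with p hp
      obtain ⟨hp0, _, hp1, hd, _⟩ := hp
      rw [div_le_one hd]
      nlinarith [sq_nonneg p.1]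
  -- combine
  have hprod := hA.mul hC
  rw [mul_one] at hprod
  apply hprod.congr'
  filter_upwards [hbasic] with p hp
  obtain ⟨hp0, hpne, hp1, hd, hslt⟩ := hp
  have hfe := (hrM _ hslt).2
  rw [hfe]
  have h1s : (0:ℝ) < 1 - ((1 - p.1) ^ 2 - p.2 ^ 2) := by linarith
  rw [div_mul_div_comm]
  rw [show (rM ((1 - p.1) ^ 2 - p.2 ^ 2)) ^ 2 * (1 - ((1 - p.1) ^ 2 - p.2 ^ 2))
      = (1 - ((1 - p.1) ^ 2 - p.2 ^ 2)) * (rM ((1 - p.1) ^ 2 - p.2 ^ 2)) ^ 2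
    from mul_comm _ _]
  rw [show 8 * M ^ 2 * (1 - ((1 - p.1) ^ 2 - p.2 ^ 2)) * (2 * p.1 + p.2 ^ 2)
      = (1 - ((1 - p.1) ^ 2 - p.2 ^ 2)) * (16 * M ^ 2 * (p.1 + p.2 ^ 2 / 2)) from by ring]
  rw [mul_div_mul_left _ _ h1s.ne']
end

section
/- For every real number M > 0 and every (u,v) ∈ ℝ² with u·v < 1, the Kruskal radius function r(u,v) = r_M(u·v) has partial derivatives ∂_u r(u,v) = -(4M²·v / r(u,v))·exp(-r(u,v)/(2M)) and ∂_v r(u,v) = -(4M²·u / r(u,v))·exp(-r(u,v)/(2M)). -/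
lemma fM_hasStrictDerivAt (M : ℝ) (hM : 0 < M) (ρ : ℝ) :
    HasStrictDerivAt (fM M) (-(ρ / (4 * M ^ 2)) * Real.exp (ρ / (2 * M))) ρ := by
  have h1 : HasStrictDerivAt (fun x : ℝ => 1 - x / (2 * M)) (-(1 / (2 * M))) ρ := by
    simpa using (hasStrictDerivAt_id ρ).div_const (2 * M) |>.const_sub 1
  have h2 : HasStrictDerivAt (fun x : ℝ => Real.exp (x / (2 * M)))
      (Real.exp (ρ / (2 * M)) * (1 / (2 * M))) ρ := by
    simpa using ((hasStrictDerivAt_id ρ).div_const (2 * M)).exp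
  have := h1.mul h2
  refine this.congr_deriv ?_
  field_simp
  ring

lemma rM_hasDerivAt (M : ℝ) (hM : 0 < M) (rM : ℝ → ℝ)
    (hrM : ∀ s : ℝ, s < 1 → 0 < rM s ∧ fM M (rM s) = s)
    (s : ℝ) (hs : s < 1) :
    HasDerivAt rM (-(4 * M ^ 2 / rM s) * Real.exp (-(rM s) / (2 * M))) s := by
  obtain ⟨hρ0, hfρ0⟩ := hrM s hs
  set ρ0 := rM s with hρ0def
  -- injectivity of fM on Ioi 0
  have hanti : StrictAntiOn (fM M) (Set.Ioi 0) := by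
    apply strictAntiOn_of_deriv_neg (convex_Ioi 0)
    · intro x _
      exact ((fM_hasStrictDerivAt M hM x).hasDerivAt.continuousAt).continuousWithinAt
    · intro x hx
      rw [interior_Ioi] at hx
      rw [(fM_hasStrictDerivAt M hM x).hasDerivAt.deriv]
      have hx0 : (0:ℝ) < x := hx
      have h4 : (0:ℝ) < 4 * M ^ 2 := by positivity
      have hexp := Real.exp_pos (x / (2 * M))
      nlinarith [mul_pos (div_pos hx0 h4) hexp]
  have hinj := hanti.injOn
  -- the local inverse near ρ0
  have hf := fM_hasStrictDerivAt M hM ρ0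
  have hf' : -(ρ0 / (4 * M ^ 2)) * Real.exp (ρ0 / (2 * M)) ≠ 0 := by
    have h4 : (0:ℝ) < 4 * M ^ 2 := by positivity
    have := Real.exp_pos (ρ0 / (2 * M))
    nlinarith [mul_pos (div_pos hρ0 h4) this]
  set g := hf.localInverse (fM M) _ ρ0 hf' with hgdef
  have hg : HasStrictDerivAt g (-(ρ0 / (4 * M ^ 2)) * Real.exp (ρ0 / (2 * M)))⁻¹ (fM M ρ0) :=
    hf.to_localInverse hf'
  rw [hfρ0] at hg
  have hgc : ContinuousAt g s := hg.hasDerivAt.continuousAt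
  have hgs : g s = ρ0 := by
    have := (hf.hasStrictFDerivAt_equiv hf').localInverse_apply_image
    rw [hfρ0] at this
    exact this
  -- eventually rM = g
  have hev : rM =ᶠ[nhds s] g := by
    have h1 : ∀ᶠ y in nhds s, fM M (g y) = y := by
      have := (hf.hasStrictFDerivAt_equiv hf').eventually_right_inverse
      rw [hfρ0] at this
      exact this
    have h2 : ∀ᶠ y in nhds s, 0 < g y := by
      have : ∀ᶠ x in nhds (g s), 0 < x := by
        rw [hgs]; exact eventually_gt_nhds hρ0
      exact hgc.eventually this
    have h3 : ∀ᶠ y in nhds s, y < 1 := eventually_lt_nhds hs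
    filter_upwards [h1, h2, h3] with y hy1 hy2 hy3
    obtain ⟨hry, hfry⟩ := hrM y hy3
    exact hinj hry hy2 (by rw [hfry, hy1])
  have hrd : HasDerivAt rM (-(ρ0 / (4 * M ^ 2)) * Real.exp (ρ0 / (2 * M)))⁻¹ s :=
    hg.hasDerivAt.congr_of_eventuallyEq hev
  convert hrd using 1
  rw [neg_div, Real.exp_neg]
  have h4 : (0:ℝ) < 4 * M ^ 2 := by positivity
  have hexp := Real.exp_pos (ρ0 / (2 * M))
  field_simp

/-- For every `M > 0` and every `(u,v)` with `u·v < 1`, the Kruskal radius function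
`r(u,v) = r_M(u·v)` (with `r_M` the Schwarzschild radius function, characterized by
`r_M(s) > 0` and `f_M(r_M(s)) = s` for all `s < 1`) has partial derivatives
`∂_u r = -(4M²·v / r)·exp(-r/(2M))` and `∂_v r = -(4M²·u / r)·exp(-r/(2M))`. -/
theorem kruskal_radius_partials (M : ℝ) (hM : 0 < M) (rM : ℝ → ℝ)
    (hrM : ∀ s : ℝ, s < 1 → 0 < rM s ∧ fM M (rM s) = s)
    (u v : ℝ) (huv : u * v < 1) :
    HasDerivAt (fun t : ℝ => rM (t * v))
      (-(4 * M ^ 2 * v / rM (u * v)) * Real.exp (-(rM (u * v)) / (2 * M))) u ∧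
    HasDerivAt (fun t : ℝ => rM (u * t))
      (-(4 * M ^ 2 * u / rM (u * v)) * Real.exp (-(rM (u * v)) / (2 * M))) v := by
  have hd := rM_hasDerivAt M hM rM hrM (u * v) huv
  constructor
  · have h1 : HasDerivAt (fun t : ℝ => t * v) v u := by
      simpa using (hasDerivAt_id u).mul_const v
    have := hd.comp u h1
    refine this.congr_deriv ?_
    ring
  · have h1 : HasDerivAt (fun t : ℝ => u * t) u v := by
      simpa using (hasDerivAt_id v).const_mul u
    have := hd.comp v h1
    refine this.congr_deriv ?_
    ring
end
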